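/- Let T = G ∧ H with supp(T) = supp(G) ⊕ supp(H), supp(G) ≠ {0} ≠ supp(H), and let D be any decision rule. Then: (a) CO(G,T) ∩ DE(T,D) ⊆ DE(G,D); (b) NT(G,T) ∩ DE(T,D) ⊆ AT(G,D); (c) DE(T,D) ⊆ DE(G,D) ∪ AT(G,D). -/

import Mathlib

open Filter
open scoped Topology

namespace MRD

abbrev Score (K : ℕ) := Fin K → ℝ

/-- The k-th standard basis vector of `ℝ^K`. -/
def stdBasis {K : ℕ} (k : Fin K) : Score K := Pi.single k 1

/-- `T` is a cutoff rule: `T x c = g (1[x_1 > c_1], ..., 1[x_K > c_K])` for a Boolean `g`. -/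
def IsCutoffRule {K : ℕ} (T : Score K → Score K → Bool) : Prop :=
  ∃ g : (Fin K → Bool) → Bool, ∀ x c, T x c = g fun k => decide (c k < x k)

/-- Support directions `S(T)`. -/
def suppDirs {K : ℕ} (T : Score K → Score K → Bool) : Set (Fin K) :=
  {k | ∃ c : Score K, ∃ l : ℝ, T 0 (c + l • stdBasis k) ≠ T 0 c}

/-- `supp(T)`: the span of the standard basis vectors in the support directions. -/
def supp {K : ℕ} (T : Score K → Score K → Bool) : Submodule ℝ (Score K) :=
  Submodule.span ℝ (stdBasis '' suppDirs T)

/-- `N^T`: scores that never affect `T`. -/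
def nspace {K : ℕ} (T : Score K → Score K → Bool) : Set (Score K) :=
  {X | ∀ c, T X c = T 0 c}

/-- The component `X^T` of `X` in `supp(T)` (coordinatewise indicator projection). -/
noncomputable def projT {K : ℕ} (T : Score K → Score K → Bool) (X : Score K) : Score K :=
  (suppDirs T).indicator X

/-- The component `X^{⊥T}` of `X` in `N^T`. -/
noncomputable def perpT {K : ℕ} (T : Score K → Score K → Bool) (X : Score K) : Score K :=
  X - projT T X

/-- Nevertaker of `T` w.r.t. decision rule `D`, for a unit with score `X`. -/
def Nevertaker {K : ℕ} (T : Score K → Score K → Bool) (D : Score K → Bool)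
    (X : Score K) : Prop :=
  ∀ c ∈ supp T, D (perpT T X - c) = false

/-- Alwaystaker of `T` w.r.t. `D`. -/
def Alwaystaker {K : ℕ} (T : Score K → Score K → Bool) (D : Score K → Bool)
    (X : Score K) : Prop :=
  ∀ c ∈ supp T, D (perpT T X - c) = true

/-- Complier of `T` w.r.t. `D`. -/
def Complier {K : ℕ} (T : Score K → Score K → Bool) (D : Score K → Bool)
    (X : Score K) : Prop :=
  ∀ c ∈ supp T, T 0 c = D (perpT T X - c)

/-- Defier of `T` w.r.t. `D`. -/
def Defier {K : ℕ} (T : Score K → Score K → Bool) (D : Score K → Bool)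
    (X : Score K) : Prop :=
  ∀ c ∈ supp T, T 0 c ≠ D (perpT T X - c)

/-- Indecisive: none of the four categories. -/
def Indecisive {K : ℕ} (T : Score K → Score K → Bool) (D : Score K → Bool)
    (X : Score K) : Prop :=
  ¬ Nevertaker T D X ∧ ¬ Alwaystaker T D X ∧ ¬ Complier T D X ∧ ¬ Defier T D X

/-- Nevertaker, cutoff-rule form: `D(X | c) = 0` for all `c ∈ supp(T)`. -/
def NevertakerC {K : ℕ} (T D : Score K → Score K → Bool) (X : Score K) : Prop :=
  ∀ c ∈ supp T, D X c = false

/-- Alwaystaker, cutoff-rule form. -/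
def AlwaystakerC {K : ℕ} (T D : Score K → Score K → Bool) (X : Score K) : Prop :=
  ∀ c ∈ supp T, D X c = true

/-- Complier, cutoff-rule form: `T(X | c) = D(X | c)` for all `c ∈ supp(T)`. -/
def ComplierC {K : ℕ} (T D : Score K → Score K → Bool) (X : Score K) : Prop :=
  ∀ c ∈ supp T, T X c = D X c

/-- Defier, cutoff-rule form. -/
def DefierC {K : ℕ} (T D : Score K → Score K → Bool) (X : Score K) : Prop :=
  ∀ c ∈ supp T, T X c ≠ D X c

section Aux

variable {K : ℕ}

lemma cutoff_shift {T : Score K → Score K → Bool} (hT : IsCutoffRule T)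
    (x c : Score K) : T x c = T 0 (c - x) := by
  obtain ⟨g, hg⟩ := hT
  rw [hg, hg]
  congr 1
  funext k
  simp [sub_neg]

lemma notMem_suppDirs {T : Score K → Score K → Bool} {k : Fin K}
    (hk : k ∉ suppDirs T) (c : Score K) (l : ℝ) :
    T 0 (c + l • stdBasis k) = T 0 c := by
  simp only [suppDirs, Set.mem_setOf_eq, not_exists, not_not] at hk
  exact hk c l

lemma invar_aux {T : Score K → Score K → Bool} :
    ∀ s : Finset (Fin K), ∀ c c' : Score K,
      (∀ k ∉ s, c k = c' k) → (∀ k ∈ s, k ∉ suppDirs T) → T 0 c = T 0 c' := by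
  intro s
  induction s using Finset.induction_on with
  | empty =>
    intro c c' h _
    have : c = c' := funext fun k => h k (Finset.notMem_empty k)
    rw [this]
  | @insert a s ha ih =>
    intro c c' h hs
    have hupd : Function.update c a (c' a) = c + (c' a - c a) • stdBasis a := by
      funext k
      by_cases hk : k = a
      · subst hk
        simp [stdBasis, Function.update_self]
      · simp [stdBasis, Function.update_of_ne hk, Pi.single_eq_of_ne hk]
    have h1 : T 0 c = T 0 (Function.update c a (c' a)) := by
      rw [hupd]
      exact (notMem_suppDirs (hs a (Finset.mem_insert_self a s)) c _).symm
    have h2 : T 0 (Function.update c a (c' a)) = T 0 c' := by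
      apply ih
      · intro k hk
        by_cases hka : k = a
        · subst hka; simp
        · rw [Function.update_of_ne hka]
          exact h k (by simp [hka, hk])
      · intro k hk
        exact hs k (Finset.mem_insert_of_mem hk)
    exact h1.trans h2

lemma invar {T : Score K → Score K → Bool} (c c' : Score K)
    (h : ∀ k ∈ suppDirs T, c k = c' k) : T 0 c = T 0 c' := by
  classical
  apply invar_aux (Finset.univ.filter fun k => k ∉ suppDirs T)
  · intro k hk
    simp only [Finset.mem_filter, Finset.mem_univ, true_and, not_not] at hk
    exact h k hk
  · intro k hk
    simp only [Finset.mem_filter] at hk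
    exact hk.2

/-- The submodule of vectors supported on the coordinate set `A`. -/
def coordSupported (A : Set (Fin K)) : Submodule ℝ (Score K) where
  carrier := {x | ∀ k ∉ A, x k = 0}
  add_mem' := fun ha hb k hk => by simp [ha k hk, hb k hk]
  zero_mem' := fun k _ => rfl
  smul_mem' := fun r a ha k hk => by simp [ha k hk]

lemma mem_coordSupported {A : Set (Fin K)} {x : Score K} :
    x ∈ coordSupported A ↔ ∀ k ∉ A, x k = 0 := Iff.rfl

lemma span_stdBasis_eq (A : Set (Fin K)) :
    Submodule.span ℝ (stdBasis '' A) = coordSupported A := by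
  apply le_antisymm
  · rw [Submodule.span_le]
    rintro _ ⟨k, hk, rfl⟩ j hj
    have : j ≠ k := fun h => hj (h ▸ hk)
    simp [stdBasis, Pi.single_eq_of_ne this]
  · intro x hx
    have hxx : x = ∑ k, Pi.single k (x k) := (Finset.univ_sum_single x).symm
    rw [hxx]
    apply Submodule.sum_mem
    intro k _
    by_cases hk : k ∈ A
    · have : Pi.single k (x k) = x k • stdBasis k := by
        funext j
        by_cases hj : j = k
        · subst hj; simp [stdBasis]
        · simp [stdBasis, Pi.single_eq_of_ne hj]
      rw [this]
      exact Submodule.smul_mem _ _ (Submodule.subset_span ⟨k, hk, rfl⟩)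
    · have : x k = 0 := hx k hk
      rw [this]
      simp

lemma stdBasis_mem_coordSupported {A : Set (Fin K)} {k : Fin K} :
    stdBasis k ∈ coordSupported A ↔ k ∈ A := by
  constructor
  · intro h
    by_contra hk
    have := h k hk
    simp [stdBasis] at this
  · intro hk j hj
    have : j ≠ k := fun h => hj (h ▸ hk)
    simp [stdBasis, Pi.single_eq_of_ne this]

lemma mem_supp_iff {T : Score K → Score K → Bool} {c : Score K} :
    c ∈ supp T ↔ ∀ k ∉ suppDirs T, c k = 0 := by
  rw [supp, span_stdBasis_eq]; rfl

end Aux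

/-- for `T = G ∧ H` with `supp(T) = supp(G) ⊕ supp(H)` and any decision
rule `D`: (a) `CO(G,T) ∩ DE(T,D) ⊆ DE(G,D)`; (b) `NT(G,T) ∩ DE(T,D) ⊆ AT(G,D)`;
(c) `DE(T,D) ⊆ DE(G,D) ∪ AT(G,D)`. -/
theorem stmt13 {K : ℕ} (T G H : Score K → Score K → Bool) (D : Score K → Bool)
    (hG : IsCutoffRule G) (hH : IsCutoffRule H)
    (hTdef : ∀ x c, T x c = (G x c && H x c))
    (hdisj : Disjoint (supp G) (supp H))
    (hsum : supp T = supp G ⊔ supp H)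
    (hGnd : supp G ≠ ⊥) (hHnd : supp H ≠ ⊥) (X : Score K) :
    (Complier G (fun y => T y 0) X → Defier T D X → Defier G D X) ∧
    (Nevertaker G (fun y => T y 0) X → Defier T D X → Alwaystaker G D X) ∧
    (Defier T D X → Defier G D X ∨ Alwaystaker G D X) := by
  classical
  set A := suppDirs G with hA
  set B := suppDirs H with hB
  set xH := B.indicator X with hxH
  -- T is a cutoff rule
  have hTcut : IsCutoffRule T := by
    obtain ⟨g1, hg1⟩ := hG
    obtain ⟨g2, hg2⟩ := hH
    exact ⟨fun b => g1 b && g2 b, fun x c => by rw [hTdef, hg1, hg2]⟩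
  -- directions are disjoint
  have hABdisj : ∀ k, k ∈ A → k ∈ B → False := by
    intro k hkA hkB
    have h1 : stdBasis k ∈ supp G := Submodule.subset_span ⟨k, hkA, rfl⟩
    have h2 : stdBasis k ∈ supp H := Submodule.subset_span ⟨k, hkB, rfl⟩
    have : stdBasis k = 0 := by
      have := hdisj.le_bot (Submodule.mem_inf.mpr ⟨h1, h2⟩)
      simpa using this
    have := congrFun this k
    simp [stdBasis] at this
  -- suppDirs T = A ∪ B
  have hTsupp : supp T = coordSupported (A ∪ B) := by
    rw [hsum, supp, supp, ← Submodule.span_union, ← Set.image_union,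
      span_stdBasis_eq]
  have hdirsT : suppDirs T = A ∪ B := by
    ext k
    have h1 : k ∈ suppDirs T ↔ stdBasis k ∈ supp T := by
      rw [supp, span_stdBasis_eq, stdBasis_mem_coordSupported]
    rw [h1, hTsupp, stdBasis_mem_coordSupported]
  -- projection decomposition
  have hproj : projT T X = projT G X + xH := by
    rw [projT, hdirsT, Set.indicator_union_of_disjoint (by
      rw [Set.disjoint_left]; exact fun k hk hk' => hABdisj k hk hk') X]
    rfl
  have hperpGH : perpT G X - perpT T X = xH := by
    rw [perpT, perpT, hproj]; abel
  -- key computation: value of D on the G-frame, given Defier T D X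
  have hmain : Defier T D X → ∀ c ∈ supp G,
      D (perpT G X - c) = !(G 0 c && H 0 (-xH)) := by
    intro hDE c hc
    rw [mem_supp_iff] at hc
    set b := c - xH with hb
    have hbT : b ∈ supp T := by
      rw [hTsupp, mem_coordSupported]
      intro k hk
      simp only [Set.mem_union, not_or] at hk
      have h1 : c k = 0 := hc k hk.1
      have h2 : xH k = 0 := Set.indicator_of_notMem hk.2 X
      simp [hb, h1, h2]
    have hframe : perpT G X - c = perpT T X - b := by
      rw [hb, ← hperpGH]
      abel
    have hD : D (perpT T X - b) = !(T 0 b) := by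
      have h := hDE b hbT
      cases hT0 : T 0 b <;> cases hD0 : D (perpT T X - b) <;>
        simp_all
    have hGb : G 0 b = G 0 c := by
      apply invar
      intro k hk
      have hkB : k ∉ B := fun h => hABdisj k hk h
      have : xH k = 0 := Set.indicator_of_notMem hkB X
      simp [hb, this]
    have hHb : H 0 b = H 0 (-xH) := by
      apply invar
      intro k hk
      have hkA : k ∉ A := fun h => hABdisj k h hk
      have : c k = 0 := hc k hkA
      simp [hb, this]
    rw [hframe, hD, hTdef, hGb, hHb]
  -- evaluation of T at the G-frame point
  have hTeval : ∀ c ∈ supp G,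
      T (perpT G X - c) 0 = (G 0 c && H 0 (-xH)) := by
    intro c hc
    rw [mem_supp_iff] at hc
    rw [cutoff_shift hTcut, zero_sub, neg_sub, hTdef]
    have hGpart : G 0 (c - perpT G X) = G 0 c := by
      apply invar
      intro k hk
      have : perpT G X k = 0 := by
        simp [perpT, projT, Set.indicator_of_mem hk]
      simp [this]
    have hHpart : H 0 (c - perpT G X) = H 0 (-xH) := by
      apply invar
      intro k hk
      have hkA : k ∉ A := fun h => hABdisj k h hk
      have h1 : c k = 0 := hc k hkA
      have h2 : perpT G X k = X k := by
        simp [perpT, projT, Set.indicator_of_notMem hkA]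
        exact fun h => absurd h hkA
      have h3 : xH k = X k := Set.indicator_of_mem hk X
      simp [h1, h2, h3]
    rw [hGpart, hHpart]
  refine ⟨?_, ?_, ?_⟩
  · -- (a)
    intro hCO hDE c hc
    have h1 : G 0 c = T (perpT G X - c) 0 := hCO c hc
    rw [hTeval c hc] at h1
    rw [hmain hDE c hc]
    cases hg : G 0 c <;> cases hh : H 0 (-xH) <;> simp_all
  · -- (b)
    intro hNT hDE c hc
    have h1 : T (perpT G X - c) 0 = false := hNT c hc
    rw [hTeval c hc] at h1
    rw [hmain hDE c hc, h1]
    simp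
  · -- (c)
    intro hDE
    by_cases hh : H 0 (-xH) = true
    · left
      intro c hc
      rw [hmain hDE c hc, hh]
      cases G 0 c <;> simp
    · right
      intro c hc
      rw [hmain hDE c hc, Bool.not_eq_true] at *
      simp [hh]

end MRD
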